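/- Divergence of Adam's momentum-to-RMS ratio in the ν → 0 limit: let (g_i)_{i≥1} be an i.i.d. sequence of standard Gaussian random variables on a probability space (Ω, P), let μ ∈ (0,1), let t ≥ 2, and define u_t(ω) = (Σ_{i=1}^{t} (1−μ)·μ^{t−i}·g_i(ω)) / |g_t(ω)|. Then the second moment of u_t is infinite: ∫⁻ u_t(ω)² dP(ω) = ∞. -/

import Mathlib

open MeasureTheory ProbabilityTheory Set Real
open scoped ENNReal NNReal



lemma div_sq_lintegral_Ioc_top {ε : ℝ} (hε : 0 < ε) :
    ∫⁻ x in Set.Ioc (0:ℝ) ε, ENNReal.ofReal (x ^ (-2 : ℝ)) ∂volume = ⊤ := by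
  by_contra h
  have hmeas : Measurable fun x : ℝ => x ^ (-2 : ℝ) := measurable_id.pow_const _
  have hnn : 0 ≤ᵐ[volume.restrict (Set.Ioc (0:ℝ) ε)] fun x : ℝ => x ^ (-2 : ℝ) := by
    filter_upwards [ae_restrict_mem measurableSet_Ioc] with x hx
    exact Real.rpow_nonneg hx.1.le _
  have hint : IntegrableOn (fun x : ℝ => x ^ (-2 : ℝ)) (Set.Ioc 0 ε) := by
    refine ⟨hmeas.aestronglyMeasurable, ?_⟩
    rw [hasFiniteIntegral_iff_ofReal hnn]
    exact lt_top_iff_ne_top.2 h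
  have := hint.mono_set Set.Ioo_subset_Ioc_self
  rw [intervalIntegral.integrableOn_Ioo_rpow_iff hε] at this
  linarith

lemma gaussian_ratio_lintegral_top (c y : ℝ) (hc : c ≠ 0) (hy : y ≠ 0) :
    ∫⁻ x, ENNReal.ofReal (((y + c * x) / |x|) ^ 2) ∂(gaussianReal 0 1) = ⊤ := by
  have hf : Measurable fun x : ℝ => ENNReal.ofReal (((y + c * x) / |x|) ^ 2) :=
    (((measurable_const.add (measurable_id.const_mul c)).div measurable_id.abs).pow_const
      2).ennreal_ofReal
  rw [gaussianReal_of_var_ne_zero 0 one_ne_zero,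
    lintegral_withDensity_eq_lintegral_mul _ (measurable_gaussianPDF 0 1) hf]
  simp only [Pi.mul_apply]
  set ε : ℝ := |y| / (2 * |c|) with hεdef
  have hcpos : 0 < |c| := abs_pos.2 hc
  have hypos : 0 < |y| := abs_pos.2 hy
  have hε : 0 < ε := div_pos hypos (by positivity)
  set K : ℝ≥0∞ := ENNReal.ofReal (gaussianPDFReal 0 1 ε * (|y| / 2) ^ 2) with hK
  have hKpos : 0 < gaussianPDFReal 0 1 ε * (|y| / 2) ^ 2 := by
    have := gaussianPDFReal_pos 0 1 ε one_ne_zero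
    positivity
  have hKne : K ≠ 0 := by
    simp [hK, ENNReal.ofReal_eq_zero, not_le, hKpos]
  have hKnetop : K ≠ ⊤ := ENNReal.ofReal_ne_top
  have key : ∀ x ∈ Set.Ioc (0:ℝ) ε,
      K * ENNReal.ofReal (x ^ (-2 : ℝ))
        ≤ gaussianPDF 0 1 x * ENNReal.ofReal (((y + c * x) / |x|) ^ 2) := by
    intro x hx
    obtain ⟨hx0, hxε⟩ := hx
    rw [hK, gaussianPDF, ← ENNReal.ofReal_mul hKpos.le,
      ← ENNReal.ofReal_mul (gaussianPDFReal_nonneg 0 1 x)]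
    apply ENNReal.ofReal_le_ofReal
    have h1 : gaussianPDFReal 0 1 ε ≤ gaussianPDFReal 0 1 x := by
      unfold gaussianPDFReal
      simp only [NNReal.coe_one, sub_zero, mul_one]
      exact mul_le_mul_of_nonneg_left (Real.exp_le_exp.2 (by nlinarith)) (by positivity)
    have h2 : (|y| / 2) ^ 2 * x ^ (-2 : ℝ) ≤ ((y + c * x) / |x|) ^ 2 := by
      have hxabs : |x| = x := abs_of_pos hx0
      have hrp : x ^ (-2 : ℝ) = (x ^ 2)⁻¹ := by
        rw [show (-2 : ℝ) = -(2:ℕ) by norm_num, Real.rpow_neg hx0.le, Real.rpow_natCast]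
      have hub : |c| * x ≤ |y| / 2 := by
        have : |c| * x ≤ |c| * ε := by nlinarith
        calc |c| * x ≤ |c| * ε := this
          _ = |y| / 2 := by rw [hεdef]; field_simp
      have habs : |y| / 2 ≤ |y + c * x| := by
        have h3 : |y| - |c * x| ≤ |y + c * x| := by
          have := abs_sub_abs_le_abs_sub y (-(c * x))
          simp only [abs_neg, sub_neg_eq_add] at this
          linarith
        have : |c * x| = |c| * x := by rw [abs_mul, hxabs]
        linarith
      have hsq : (|y| / 2) ^ 2 ≤ (y + c * x) ^ 2 := by
        have := pow_le_pow_left₀ (by positivity) habs 2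
        rwa [sq_abs] at this
      calc (|y| / 2) ^ 2 * x ^ (-2:ℝ) = (|y| / 2) ^ 2 * (x ^ 2)⁻¹ := by rw [hrp]
        _ ≤ (y + c * x) ^ 2 * (x ^ 2)⁻¹ :=
            mul_le_mul_of_nonneg_right hsq (inv_nonneg.2 (sq_nonneg x))
        _ = ((y + c * x) / |x|) ^ 2 := by rw [hxabs, div_pow, div_eq_mul_inv]
    calc gaussianPDFReal 0 1 ε * (|y| / 2) ^ 2 * x ^ (-2 : ℝ)
        = gaussianPDFReal 0 1 ε * ((|y| / 2) ^ 2 * x ^ (-2 : ℝ)) := by ring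
      _ ≤ gaussianPDFReal 0 1 x * ((y + c * x) / |x|) ^ 2 := by
          apply mul_le_mul h1 h2 (by positivity) (gaussianPDFReal_nonneg 0 1 x)
  rw [eq_top_iff]
  calc (⊤ : ℝ≥0∞) = K * ∫⁻ x in Set.Ioc (0:ℝ) ε, ENNReal.ofReal (x ^ (-2:ℝ)) ∂volume := by
        rw [div_sq_lintegral_Ioc_top hε, ENNReal.mul_top hKne]
    _ = ∫⁻ x in Set.Ioc (0:ℝ) ε, K * ENNReal.ofReal (x ^ (-2:ℝ)) ∂volume :=
        (lintegral_const_mul K ((measurable_id.pow_const _).ennreal_ofReal)).symm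
    _ ≤ ∫⁻ x in Set.Ioc (0:ℝ) ε,
          gaussianPDF 0 1 x * ENNReal.ofReal (((y + c * x) / |x|) ^ 2) ∂volume := by
        exact setLIntegral_mono ((measurable_gaussianPDF 0 1).mul hf) key
    _ ≤ ∫⁻ x, gaussianPDF 0 1 x * ENNReal.ofReal (((y + c * x) / |x|) ^ 2) ∂volume :=
        setLIntegral_le_lintegral _ _


lemma indep_gaussian_shift_zero {Ω : Type*} [MeasurableSpace Ω] (P : Measure Ω)
    [IsProbabilityMeasure P] (Z X : Ω → ℝ) (hZ : Measurable Z) (hX : Measurable X)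
    (h : IndepFun Z X P) (hlawX : P.map X = gaussianReal 0 1) (c : ℝ) (hc : c ≠ 0) :
    P {ω | Z ω + c * X ω = 0} = 0 := by
  have hmapprod := (indepFun_iff_map_prod_eq_prod_map_map hZ.aemeasurable hX.aemeasurable).mp h
  have hA : MeasurableSet {p : ℝ × ℝ | p.1 + c * p.2 = 0} :=
    measurableSet_eq_fun (measurable_fst.add (measurable_snd.const_mul c)) measurable_const
  have hpre : {ω | Z ω + c * X ω = 0}
      = (fun ω => (Z ω, X ω)) ⁻¹' {p : ℝ × ℝ | p.1 + c * p.2 = 0} := rfl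
  rw [hpre, ← Measure.map_apply (hZ.prodMk hX) hA, hmapprod, hlawX, Measure.prod_apply hA]
  have hzero : ∀ z : ℝ, gaussianReal 0 1 (Prod.mk z ⁻¹' {p : ℝ × ℝ | p.1 + c * p.2 = 0}) = 0 := by
    intro z
    have hset : (Prod.mk z ⁻¹' {p : ℝ × ℝ | p.1 + c * p.2 = 0}) = {-z / c} := by
      ext x
      simp only [Set.mem_preimage, Set.mem_setOf_eq, Set.mem_singleton_iff]
      constructor
      · intro hx; field_simp; linarith
      · intro hx; rw [hx]; field_simp; ring
    rw [hset]
    exact gaussianReal_absolutelyContinuous 0 one_ne_zero (measure_singleton _)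
  simp only [hzero, lintegral_zero]


/-- **Divergence of Adam's momentum-to-RMS ratio in the `ν → 0` limit.**
Let `(g i)_{i ≥ 1}` be an i.i.d. sequence of standard Gaussian random variables, let
`μ ∈ (0,1)`, let `t ≥ 2`, and define
`u_t ω = (∑_{i=1}^{t} (1-μ) μ^(t-i) g i ω) / |g t ω|`.
Then the second moment of `u_t` is infinite. -/
theorem adam_momentum_ratio_divergence
    {Ω : Type*} [MeasurableSpace Ω] (P : Measure Ω) [IsProbabilityMeasure P]
    (g : ℕ → Ω → ℝ) (hmeas : ∀ i, Measurable (g i))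
    (hindep : iIndepFun g P)
    (hlaw : ∀ i, P.map (g i) = gaussianReal 0 1)
    (μ : ℝ) (hμ : μ ∈ Set.Ioo (0:ℝ) 1)
    (t : ℕ) (ht : 2 ≤ t) :
    (∫⁻ ω, ENNReal.ofReal
        (((∑ i ∈ Finset.Icc 1 t, (1 - μ) * μ ^ (t - i) * g i ω) / |g t ω|) ^ 2) ∂P) = ⊤ := by
  obtain ⟨hμ0, hμ1⟩ := hμ
  have hμne : (1 : ℝ) - μ ≠ 0 := by linarith
  -- the part of the sum not involving `g t`
  set Y : Ω → ℝ := fun ω => ∑ i ∈ Finset.Icc 1 (t - 1), (1 - μ) * μ ^ (t - i) * g i ω with hYdef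
  have hYmeas : Measurable Y := by
    apply Finset.measurable_sum
    exact fun i _ => (hmeas i).const_mul _
  -- independence of `Y` and `g t`
  have hindYg : IndepFun Y (g t) P := by
    set F : ℕ → Ω → ℝ :=
      fun i ω => (if i = t then 1 else (1 - μ) * μ ^ (t - i)) * g i ω with hFdef
    have hFmeas : ∀ i, Measurable (F i) := fun i => (hmeas i).const_mul _
    have hFindep : iIndepFun F P :=
      hindep.comp (fun i x => (if i = t then 1 else (1 - μ) * μ ^ (t - i)) * x)
        (fun i => measurable_id.const_mul _)
    have hnotmem : t ∉ Finset.Icc 1 (t - 1) := by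
      simp only [Finset.mem_Icc]; omega
    have h := hFindep.indepFun_finsetSum_of_notMem hFmeas hnotmem
    have hsumF : (∑ j ∈ Finset.Icc 1 (t - 1), F j) = Y := by
      funext ω
      rw [Finset.sum_apply]
      refine Finset.sum_congr rfl fun i hi => ?_
      have hit : i ≠ t := by
        simp only [Finset.mem_Icc] at hi; omega
      simp only [hFdef, if_neg hit]
    have hFt : F t = g t := by
      funext ω; simp [hFdef]
    rwa [hsumF, hFt] at h
  -- joint law is the product law
  have hmapprod : P.map (fun ω => (Y ω, g t ω))
      = (P.map Y).prod (gaussianReal 0 1) := by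
    have := (indepFun_iff_map_prod_eq_prod_map_map hYmeas.aemeasurable
      (hmeas t).aemeasurable).mp hindYg
    rwa [hlaw t] at this
  -- `Y` has no atom at `0`
  have hρ0 : (P.map Y) {0} = 0 := by
    rw [Measure.map_apply hYmeas (measurableSet_singleton 0)]
    set Z : Ω → ℝ :=
      fun ω => ∑ i ∈ Finset.Icc 1 (t - 2), (1 - μ) * μ ^ (t - i) * g i ω with hZdef
    have hZmeas : Measurable Z := by
      apply Finset.measurable_sum
      exact fun i _ => (hmeas i).const_mul _
    have hpre : Y ⁻¹' {0}
        = {ω | Z ω + ((1 - μ) * μ ^ (t - (t - 1))) * g (t - 1) ω = 0} := by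
      ext ω
      simp only [Set.mem_preimage, Set.mem_singleton_iff, Set.mem_setOf_eq, hYdef, hZdef]
      have hs := Finset.sum_Icc_succ_top (a := 1) (b := t - 2)
        (by omega : 1 ≤ t - 2 + 1) (fun i => (1 - μ) * μ ^ (t - i) * g i ω)
      rw [show t - 2 + 1 = t - 1 by omega] at hs
      rw [hs]
    rw [hpre]
    -- independence of `Z` and `g (t-1)`
    have hindZg : IndepFun Z (g (t - 1)) P := by
      set G : ℕ → Ω → ℝ :=
        fun i ω => (if i = t - 1 then 1 else (1 - μ) * μ ^ (t - i)) * g i ω with hGdef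
      have hGmeas : ∀ i, Measurable (G i) := fun i => (hmeas i).const_mul _
      have hGindep : iIndepFun G P :=
        hindep.comp (fun i x => (if i = t - 1 then 1 else (1 - μ) * μ ^ (t - i)) * x)
          (fun i => measurable_id.const_mul _)
      have hnotmem : t - 1 ∉ Finset.Icc 1 (t - 2) := by
        simp only [Finset.mem_Icc]; omega
      have h := hGindep.indepFun_finsetSum_of_notMem hGmeas hnotmem
      have hsumG : (∑ j ∈ Finset.Icc 1 (t - 2), G j) = Z := by
        funext ω
        rw [Finset.sum_apply]
        refine Finset.sum_congr rfl fun i hi => ?_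
        have hit : i ≠ t - 1 := by
          simp only [Finset.mem_Icc] at hi; omega
        simp only [hGdef, if_neg hit]
      have hGt : G (t - 1) = g (t - 1) := by
        funext ω; simp [hGdef]
      rwa [hsumG, hGt] at h
    exact indep_gaussian_shift_zero P Z (g (t - 1)) hZmeas (hmeas (t - 1)) hindZg
      (hlaw (t - 1)) _ (mul_ne_zero hμne (pow_ne_zero _ hμ0.ne'))
  -- the two-variable integrand
  set Fn : ℝ × ℝ → ℝ≥0∞ :=
    fun p => ENNReal.ofReal (((p.1 + (1 - μ) * p.2) / |p.2|) ^ 2) with hFndef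
  have hFn : Measurable Fn :=
    (((measurable_fst.add (measurable_snd.const_mul _)).div
      measurable_snd.abs).pow_const 2).ennreal_ofReal
  -- rewrite the integrand
  have hpt : ∀ ω, (∑ i ∈ Finset.Icc 1 t, (1 - μ) * μ ^ (t - i) * g i ω)
      = Y ω + (1 - μ) * g t ω := by
    intro ω
    have hs := Finset.sum_Icc_succ_top (a := 1) (b := t - 1)
      (by omega : 1 ≤ t - 1 + 1) (fun i => (1 - μ) * μ ^ (t - i) * g i ω)
    rw [show t - 1 + 1 = t by omega] at hs
    rw [hs, hYdef]
    simp
  calc ∫⁻ ω, ENNReal.ofReal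
        (((∑ i ∈ Finset.Icc 1 t, (1 - μ) * μ ^ (t - i) * g i ω) / |g t ω|) ^ 2) ∂P
      = ∫⁻ ω, Fn (Y ω, g t ω) ∂P := lintegral_congr fun ω => by rw [hFndef, hpt ω]
    _ = ∫⁻ p, Fn p ∂(P.map (fun ω => (Y ω, g t ω))) :=
        (lintegral_map hFn (hYmeas.prodMk (hmeas t))).symm
    _ = ∫⁻ p, Fn p ∂((P.map Y).prod (gaussianReal 0 1)) := by rw [hmapprod]
    _ = ∫⁻ y, ∫⁻ x, Fn (y, x) ∂(gaussianReal 0 1) ∂(P.map Y) :=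
        lintegral_prod Fn hFn.aemeasurable
    _ = ⊤ := by
        have hinner : ∀ y : ℝ, y ≠ 0 →
            ∫⁻ x, Fn (y, x) ∂(gaussianReal 0 1) = ⊤ := fun y hy =>
          gaussian_ratio_lintegral_top (1 - μ) y hμne hy
        have hae : (fun y => ∫⁻ x, Fn (y, x) ∂(gaussianReal 0 1))
            =ᵐ[P.map Y] (fun _ => (⊤ : ℝ≥0∞)) := by
          rw [Filter.EventuallyEq, ae_iff]
          refine measure_mono_null (fun y hy => ?_) hρ0
          simp only [Set.mem_setOf_eq] at hy
          simp only [Set.mem_singleton_iff]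
          by_contra hy0
          exact hy (hinner y hy0)
        have : IsProbabilityMeasure (P.map Y) := Measure.isProbabilityMeasure_map hYmeas.aemeasurable
        rw [lintegral_congr_ae hae, lintegral_const, measure_univ, mul_one]
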